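/- arXiv:1010.4202 — 4 statements merged into one kernel-verified Lean document; each statement's English description precedes it below -/
import Mathlib

section
/- For r, s ≥ 0 and φ ∈ [0,2π), write the point e^{s}·(k_{−φ}·(e^{−r} i)) ∈ ℍ in polar coordinates as k_η·(e^{−R} i) with R = R(r,s,φ) ≥ 0 (so R is the hyperbolic distance from i to this point). Then cosh(R(r,s,φ)) = −cos(2φ) sinh r sinh s + cosh r cosh s. -/
open MeasureTheory Real Complex Filter

noncomputable section

/-- Möbius action of `SL(2,ℝ)` on `ℂ`. -/
def moebius (g : Matrix.SpecialLinearGroup (Fin 2) ℝ) (z : ℂ) : ℂ :=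
  ((g.1 0 0 : ℝ) * z + (g.1 0 1 : ℝ)) / ((g.1 1 0 : ℝ) * z + (g.1 1 1 : ℝ))

/-- The rotation `k_u ∈ SO(2) ⊆ SL(2,ℝ)`. -/
def kmat (u : ℝ) : Matrix.SpecialLinearGroup (Fin 2) ℝ :=
  ⟨!![Real.cos u, Real.sin u; -Real.sin u, Real.cos u], by
    simp [Matrix.det_fin_two_of]
    nlinarith [Real.sin_sq_add_cos_sq u]⟩

/-- The diagonal matrix `R_r = diag (e^{-r/2}, e^{r/2}) ∈ SL(2,ℝ)`. -/
def Rmat (r : ℝ) : Matrix.SpecialLinearGroup (Fin 2) ℝ :=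
  ⟨!![Real.exp (-r/2), 0; 0, Real.exp (r/2)], by
    simp [Matrix.det_fin_two_of, ← Real.exp_add]
    ring_nf⟩

/-- The hyperbolic measure `y⁻² dx dy` on the upper half plane, as a measure on `ℂ`. -/
def hypMeasure : Measure ℂ :=
  (volume.withDensity fun z => ENNReal.ofReal (1 / z.im ^ 2)).restrict {z | 0 < z.im}

def SO2Invariant (f : ℂ → ℝ) : Prop := ∀ (u : ℝ) (z : ℂ), f (moebius (kmat u) z) = f z

/-- `cosh` of the hyperbolic distance from `i` to `z`: `(1 + x² + y²)/(2y)` for `z = x+iy`. -/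
def coshDistI (z : ℂ) : ℝ := (1 + z.re ^ 2 + z.im ^ 2) / (2 * z.im)

/-- The hyperbolic polar radius of `z`, i.e. the hyperbolic distance from `i` to `z`
(`arcosh` of `coshDistI z`). -/
def radl (z : ℂ) : ℝ := Real.log (coshDistI z + Real.sqrt (coshDistI z ^ 2 - 1))

/-- The Legendre function `P_a(c) = (1/2π) ∫₀^{2π} (c + √(c²−1) cos φ)^a dφ`, complex degree. -/
def legendreC (a : ℂ) (c : ℝ) : ℂ :=
  (1 / (2 * π) : ℝ) *
    ∫ φ in Set.Ioo (0:ℝ) (2*π), ((c + Real.sqrt (c ^ 2 - 1) * Real.cos φ : ℝ) : ℂ) ^ a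

/-- The Legendre function `P_a(c)`, real degree. -/
def legendreR (a : ℝ) (c : ℝ) : ℝ :=
  (1 / (2 * π)) * ∫ φ in Set.Ioo (0:ℝ) (2*π), (c + Real.sqrt (c ^ 2 - 1) * Real.cos φ) ^ a

/-- The Helgason–Fourier transform of an `SO(2)`-invariant function, in radial form:
`ℋf(1/2+it) = 2π ∫₀^∞ f(e^{-r} i) P_{-1/2+it}(cosh r) sinh r dr`. -/
def helgasonRad (f : ℂ → ℝ) (t : ℝ) : ℂ :=
  (2 * π : ℝ) * ∫ r in Set.Ioi (0:ℝ),
    (f ((Real.exp (-r) : ℝ) * Complex.I) : ℂ) *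
      legendreC (-(1/2) + t * Complex.I) (Real.cosh r) * (Real.sinh r : ℝ)

/-- The dilation `H^δ(k·(e^{-r}i)) = H(k·(e^{-δr}i)) (sinh(δr)/sinh r) P_{-1/2}(cosh(δr))`
of an `SO(2)`-invariant function. -/
def dilate (H : ℂ → ℝ) (δ : ℝ) (z : ℂ) : ℝ :=
  H ((Real.exp (-(δ * radl z)) : ℝ) * Complex.I) *
    (Real.sinh (δ * radl z) / Real.sinh (radl z)) *
    legendreR (-(1/2)) (Real.cosh (δ * radl z))

/-- Squared `L²(ℍ, dz)` norm of a real function. -/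
def L2sqR (f : ℂ → ℝ) : ℝ := ∫ z, f z ^ 2 ∂hypMeasure

/-- The convolution of a bi-invariant density with an `SO(2)`-invariant function,
in polar coordinates:
`(f_ε * h)(z) = 2π ∫₀^{2π} ∫₀^∞ f_ε(e^{-s}i) h(e^s·(k_{-φ}·z)) sinh s ds dφ`. -/
def convPolar (fε h : ℂ → ℝ) (z : ℂ) : ℝ :=
  2 * π * ∫ φ in Set.Ioo (0:ℝ) (2*π), ∫ s in Set.Ioi (0:ℝ),
    fε ((Real.exp (-s) : ℝ) * Complex.I) *
      h ((Real.exp s : ℝ) * moebius (kmat (-φ)) z) * Real.sinh s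

end

section
open MeasureTheory Real Complex Filter

lemma aux_cosh (a E b c : ℝ) (ha : 0 < a) (hE : 0 < E) (hb2 : b^2 + c^2 = 1) :
    coshDistI ((E:ℂ) * (((c:ℂ) * ((a:ℂ) * Complex.I) + ((-b : ℝ) : ℂ)) /
        ((b:ℂ) * ((a:ℂ) * Complex.I) + (c:ℂ)))) =
      -(c^2 - b^2) * ((a⁻¹ - a)/2) * ((E - E⁻¹)/2) + ((a⁻¹ + a)/2) * ((E + E⁻¹)/2) := by
  have hD : (0:ℝ) < a^2*b^2 + c^2 := by nlinarith [mul_pos ha ha, sq_nonneg b, sq_nonneg (a*b), sq_nonneg c]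
  have hb2c : (b:ℂ)^2 + (c:ℂ)^2 = 1 := by exact_mod_cast congrArg (Complex.ofReal) hb2
  have hDc : ((a^2*b^2 + c^2 : ℝ) : ℂ) ≠ 0 := by exact_mod_cast hD.ne'
  have hden : (b:ℂ) * ((a:ℂ) * Complex.I) + (c:ℂ) ≠ 0 := by
    intro h
    have h1 : b * a = 0 := by simpa using congrArg Complex.im h
    have h2 : c = 0 := by simpa using congrArg Complex.re h
    have h3 : b = 0 := by
      rcases mul_eq_zero.1 h1 with h | h
      · exact h
      · exact absurd h ha.ne'
    rw [h2, h3] at hb2; norm_num at hb2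
  set x := E*b*c*(a^2-1)/(a^2*b^2+c^2) with hxdef
  set y := E*a/(a^2*b^2+c^2) with hydef
  have hpt' : (E:ℂ) * (((c:ℂ) * ((a:ℂ) * Complex.I) + ((-b : ℝ) : ℂ)) /
        ((b:ℂ) * ((a:ℂ) * Complex.I) + (c:ℂ))) * ((a^2*b^2 + c^2 : ℝ) : ℂ) =
        ((E*b*c*(a^2-1) : ℝ) : ℂ) + ((E*a : ℝ) : ℂ) * Complex.I := by
    rw [mul_div_assoc', div_mul_eq_mul_div, div_eq_iff hden]
    push_cast
    linear_combination ((E:ℂ)*(a:ℂ)*(c:ℂ)*Complex.I - (E:ℂ)*(a:ℂ)^2*(b:ℂ)) * hb2c +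
      (-(E:ℂ)*(a:ℂ)^2*(b:ℂ)) * Complex.I_sq
  have hpt : (E:ℂ) * (((c:ℂ) * ((a:ℂ) * Complex.I) + ((-b : ℝ) : ℂ)) /
        ((b:ℂ) * ((a:ℂ) * Complex.I) + (c:ℂ))) = (x:ℝ) + (y:ℝ)*Complex.I := by
    rw [(eq_div_iff hDc).mpr hpt', hxdef, hydef]
    push_cast
    field_simp
  rw [hpt, coshDistI]
  simp only [Complex.add_re, Complex.add_im, Complex.ofReal_re, Complex.ofReal_im,
    Complex.mul_re, Complex.mul_im, Complex.I_re, Complex.I_im, mul_zero, mul_one,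
    zero_sub, zero_add, neg_zero, add_zero, sub_zero, zero_mul]
  have key : 2*((a^2*b^2+c^2)^2 + E^2*b^2*c^2*(a^2-1)^2 + E^2*a^2) =
      (a^2*b^2+c^2) * ((b^2-c^2)*(1-a^2)*(E^2-1) + (1+a^2)*(E^2+1)) := by
    have hc2 : c^2 = 1 - b^2 := by linarith
    rw [hc2]; ring
  have hy : 0 < y := by rw [hydef]; positivity
  have hL : (1 + x^2 + y^2)/(2*y) =
      (2*((a^2*b^2+c^2)^2 + E^2*b^2*c^2*(a^2-1)^2 + E^2*a^2))/(4*E*a*(a^2*b^2+c^2)) := by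
    rw [hxdef, hydef]
    field_simp [hD.ne', (by linarith : 0 < b^2*a^2+c^2).ne']
    ring
  have hR : -(c^2 - b^2) * ((a⁻¹ - a)/2) * ((E - E⁻¹)/2) + ((a⁻¹ + a)/2) * ((E + E⁻¹)/2) =
      ((a^2*b^2+c^2) * ((b^2-c^2)*(1-a^2)*(E^2-1) + (1+a^2)*(E^2+1)))/(4*E*a*(a^2*b^2+c^2)) := by
    field_simp [hD.ne', (by linarith : 0 < b^2*a^2+c^2).ne']
    ring
  rw [hL, hR, key]

/-- **Lemma B.3, key computation.** Writing `e^{s}·(k_{−φ}·(e^{−r}i)) = k_η·(e^{−R}i)` in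
polar coordinates, `cosh R = −cos(2φ) sinh r sinh s + cosh r cosh s`. -/
theorem cosh_polar_radius_formula
    (r s φ : ℝ) (hr : 0 ≤ r) (hs : 0 ≤ s) (hφ : φ ∈ Set.Ico 0 (2*π)) :
    coshDistI ((Real.exp s : ℝ) * moebius (kmat (-φ)) ((Real.exp (-r) : ℝ) * Complex.I)) =
      -Real.cos (2*φ) * Real.sinh r * Real.sinh s + Real.cosh r * Real.cosh s := by
  have h := aux_cosh (Real.exp (-r)) (Real.exp s) (Real.sin φ) (Real.cos φ)
    (Real.exp_pos _) (Real.exp_pos _) (Real.sin_sq_add_cos_sq φ)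
  have harg : (Real.exp s : ℂ) * (((Real.cos φ : ℂ) * ((Real.exp (-r) : ℂ) * Complex.I) +
        ((-Real.sin φ : ℝ) : ℂ)) / ((Real.sin φ : ℂ) * ((Real.exp (-r) : ℂ) * Complex.I) +
        (Real.cos φ : ℂ)))
      = (Real.exp s : ℝ) * moebius (kmat (-φ)) ((Real.exp (-r) : ℝ) * Complex.I) := by
    rw [moebius]
    simp only [kmat, Matrix.cons_val', Matrix.cons_val_zero, Matrix.cons_val_one,
      Matrix.head_cons, Matrix.head_fin_const, Matrix.empty_val', Matrix.cons_val_fin_one,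
      Matrix.of_apply, Real.cos_neg, Real.sin_neg]
    push_cast [-Complex.ofReal_sin, -Complex.ofReal_cos]
    ring_nf
  rw [← harg, h]
  rw [Real.cos_two_mul, Real.sinh_eq, Real.cosh_eq, Real.sinh_eq, Real.cosh_eq,
    (by rw [← Real.exp_neg, neg_neg] : Real.exp r = (Real.exp (-r))⁻¹),
    (by rw [← Real.exp_neg] : Real.exp (-s) = (Real.exp s)⁻¹)]
  have hsc := Real.sin_sq_add_cos_sq φ
  linear_combination (((Real.exp (-r))⁻¹ - Real.exp (-r))/2 * ((Real.exp s - (Real.exp s)⁻¹)/2)) * hsc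
end
end

section
/- Suppose H : ℍ → ℝ is SO(2)-invariant and r ↦ H(e^{−r} i) is monotonically decreasing on [0,∞). Then for all s ≥ 0, φ ∈ [0, 2π) and r ≥ 0, H( e^{s}·(k_{−φ}·(e^{−r} i)) ) ≤ H( e^{−|r−s|} i ). -/
open MeasureTheory Real Complex Filter

section
open MeasureTheory Real Complex Filter

lemma moebius_kmat (u : ℝ) (z : ℂ) : moebius (kmat u) z =
    ((Real.cos u : ℂ) * z + (Real.sin u : ℂ)) / ((-(Real.sin u) : ℂ) * z + (Real.cos u : ℂ)) := by
  simp [moebius, kmat]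

lemma exists_angle (A B : ℝ) : ∃ θ : ℝ, Real.sin θ * A + Real.cos θ * B = 0 := by
  rcases eq_or_lt_of_le (by positivity : (0:ℝ) ≤ A^2 + B^2) with h | h
  · refine ⟨0, by simp; nlinarith [sq_nonneg A, sq_nonneg B]⟩
  · set R := Real.sqrt (A^2 + B^2) with hR_def
    have hR : 0 < R := Real.sqrt_pos.2 h
    have hRsq : R^2 = A^2 + B^2 := Real.sq_sqrt h.le
    have h1 : -1 ≤ A/R := by rw [neg_le, ← neg_div]; apply div_le_one_of_le₀ ?_ hR.le; nlinarith [sq_nonneg (A - R), sq_nonneg B]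
    have h2 : A/R ≤ 1 := by apply div_le_one_of_le₀ ?_ hR.le; nlinarith [sq_nonneg (A - R), sq_nonneg B]
    have hc : Real.cos (Real.arccos (A/R)) = A/R := Real.cos_arccos h1 h2
    have hs : Real.sin (Real.arccos (A/R)) = |B|/R := by
      rw [Real.sin_arccos, show 1 - (A/R)^2 = (|B|/R)^2 by rw [div_pow, div_pow, _root_.sq_abs]; field_simp; nlinarith []]
      exact Real.sqrt_sq (by positivity)
    by_cases hB : 0 ≤ B
    · refine ⟨-Real.arccos (A/R), ?_⟩
      rw [Real.sin_neg, Real.cos_neg, hs, hc, _root_.abs_of_nonneg hB]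
      field_simp
      ring
    · refine ⟨Real.arccos (A/R), ?_⟩
      rw [hs, hc, abs_of_neg (lt_of_not_ge hB)]
      field_simp
      ring

lemma exists_polar (H : ℂ → ℝ) (hinv : SO2Invariant H) (z : ℂ) (hz : 0 < z.im) :
    ∃ ρ : ℝ, 0 ≤ ρ ∧ H z = H ((Real.exp (-ρ) : ℝ) * Complex.I) ∧
      Real.cosh ρ = (1 + z.re ^ 2 + z.im ^ 2) / (2 * z.im) := by
  obtain ⟨θ, hθ⟩ := exists_angle ((1 - (z.re^2 + z.im^2))/2) z.re
  set u := θ/2 with hu_def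
  set c := Real.cos u with hc_def
  set s := Real.sin u with hs_def
  have hcs : s^2 + c^2 = 1 := Real.sin_sq_add_cos_sq u
  have hθ' : s*c*(1 - (z.re^2+z.im^2)) + (2*c^2 - 1)*z.re = 0 := by
    have e1 : Real.sin θ = 2*s*c := by rw [show θ = 2*u by rw [hu_def]; ring]; exact Real.sin_two_mul u
    have e2 : Real.cos θ = 2*c^2 - 1 := by rw [show θ = 2*u by rw [hu_def]; ring]; exact Real.cos_two_mul u
    rw [e1, e2] at hθ
    linear_combination hθ
  set n : ℂ := (c:ℂ)*z + (s:ℂ) with hn_def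
  set d : ℂ := (-(s:ℝ):ℂ)*z + (c:ℂ) with hd_def
  have hnre : n.re = c*z.re + s := by simp [hn_def]
  have hnim : n.im = c*z.im := by simp [hn_def]
  have hdre : d.re = -s*z.re + c := by simp [hd_def]
  have hdim : d.im = -s*z.im := by simp [hd_def]
  have hdne : d ≠ 0 := by
    intro h0
    have h1 : -s*z.im = 0 := by rw [← hdim, h0]; simp
    have hs0 : s = 0 := by
      rcases mul_eq_zero.1 h1 with h | h
      · linarith [neg_eq_zero.1 h]
      · exact absurd h hz.ne'
    have h2 : -s*z.re + c = 0 := by rw [← hdre, h0]; simp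
    rw [hs0] at h2 hcs
    simp at h2
    nlinarith
  have hD : 0 < Complex.normSq d := Complex.normSq_pos.2 hdne
  set t := z.im / Complex.normSq d with ht_def
  have ht : 0 < t := div_pos hz hD
  -- numerator identities
  have hnum : (c*z.re + s)*(-s*z.re + c) + c*z.im*(-s*z.im) = 0 := by
    linear_combination hθ' - z.re * hcs
  have hQ : c*z.im*(-s*z.re + c) - (c*z.re + s)*(-s*z.im) = z.im := by
    linear_combination z.im * hcs
  have hre0 : (n/d).re = 0 := by
    rw [Complex.div_re, hnre, hnim, hdre, hdim, ← add_div, hnum, zero_div]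
  have himt : (n/d).im = t := by
    rw [Complex.div_im, hnim, hnre, hdre, hdim, div_sub_div_same, hQ, ht_def]
  have hw : moebius (kmat u) z = (t:ℝ)*Complex.I := by
    rw [moebius_kmat, ← hn_def, ← hd_def]
    apply Complex.ext
    · simp [hre0]
    · simp [himt]
  have hHz : H z = H ((t:ℝ)*Complex.I) := by rw [← hinv u z, hw]
  -- key algebraic identity
  have hprod : Complex.normSq n * Complex.normSq d = z.im^2 := by
    rw [Complex.normSq_apply, Complex.normSq_apply, hnre, hnim, hdre, hdim]
    linear_combination ((c*z.re + s)*(-s*z.re + c) + c*z.im*(-s*z.im)) * hnum +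
      (c*z.im*(-s*z.re + c) - (c*z.re + s)*(-s*z.im) + z.im) * hQ
  have hNsum : Complex.normSq n + Complex.normSq d = 1 + z.re^2 + z.im^2 := by
    rw [Complex.normSq_apply, Complex.normSq_apply, hnre, hnim, hdre, hdim]
    linear_combination (z.re^2 + z.im^2 + 1) * hcs
  have htkey : (t^2 + 1) * z.im = (1 + z.re^2 + z.im^2) * t := by
    rw [ht_def]
    field_simp
    linear_combination Complex.normSq d * hNsum - hprod
  have hcoshval : (t + t⁻¹)/2 = (1 + z.re^2 + z.im^2) / (2*z.im) := by
    rw [div_eq_div_iff (by norm_num) (by linarith)]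
    field_simp
    linear_combination htkey
  by_cases hle : t ≤ 1
  · refine ⟨-Real.log t, ?_, ?_, ?_⟩
    · exact neg_nonneg.2 (Real.log_nonpos ht.le hle)
    · rw [neg_neg, Real.exp_log ht]; exact hHz
    · rw [Real.cosh_eq, neg_neg, Real.exp_log ht, Real.exp_neg, Real.exp_log ht, ← hcoshval]
      ring
  · refine ⟨Real.log t, Real.log_nonneg (le_of_not_ge hle), ?_, ?_⟩
    · rw [Real.exp_neg, Real.exp_log ht, hHz]
      have hmo2 : moebius (kmat (Real.pi/2)) ((t⁻¹:ℝ)*Complex.I) = (t:ℝ)*Complex.I := by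
        rw [moebius_kmat, Real.cos_pi_div_two, Real.sin_pi_div_two]
        have htne : (t:ℂ) ≠ 0 := by exact_mod_cast ht.ne'
        push_cast
        rw [div_eq_iff (by simp [Complex.ext_iff, ht.ne'])]
        rw [mul_comm]
        field_simp
        simp only [mul_zero, zero_add, add_zero, mul_neg, Complex.I_mul_I]
        linear_combination (t:ℂ) * Complex.I_sq
      rw [← hmo2, hinv]
    · rw [Real.cosh_eq, Real.exp_log ht, Real.exp_neg, Real.exp_log ht, ← hcoshval]


set_option maxHeartbeats 1000000 in
/-- **Lemma B.4.** If `H` is `SO(2)`-invariant and `r ↦ H(e^{−r}i)` is monotonically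
decreasing, then `H(e^{s}·(k_{−φ}·(e^{−r}i))) ≤ H(e^{−|r−s|} i)` for `s ≥ 0`,
`φ ∈ [0,2π)`, `r ≥ 0`. -/
theorem monotone_invariant_bound
    (H : ℂ → ℝ) (hinv : SO2Invariant H)
    (hmono : ∀ r₁ r₂ : ℝ, 0 ≤ r₁ → r₁ ≤ r₂ →
      H ((Real.exp (-r₂) : ℝ) * Complex.I) ≤ H ((Real.exp (-r₁) : ℝ) * Complex.I))
    (s φ r : ℝ) (hs : 0 ≤ s) (hφ : φ ∈ Set.Ico 0 (2*π)) (hr : 0 ≤ r) :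
    H ((Real.exp s : ℝ) * moebius (kmat (-φ)) ((Real.exp (-r) : ℝ) * Complex.I)) ≤
      H ((Real.exp (-|r - s|) : ℝ) * Complex.I) := by
  have hcs : Real.sin φ ^ 2 + Real.cos φ ^ 2 = 1 := Real.sin_sq_add_cos_sq φ
  set a := Real.exp (-r) with ha_def
  set E := Real.exp s with hE_def
  set C := Real.cos φ with hC_def
  set S := Real.sin φ with hS_def
  have ha : 0 < a := Real.exp_pos _
  have hE : 0 < E := Real.exp_pos _
  have ha1 : a ≤ 1 := by rw [ha_def, ← Real.exp_zero]; exact Real.exp_le_exp.2 (by linarith)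
  have hE1 : 1 ≤ E := by rw [hE_def, ← Real.exp_zero]; exact Real.exp_le_exp.2 hs
  set D := C^2 + S^2*a^2 with hD_def
  have hD : 0 < D := by nlinarith [sq_nonneg C, mul_pos ha ha, mul_nonneg (sq_nonneg C) (by nlinarith : (0:ℝ) ≤ 1 - a^2)]
  set w := moebius (kmat (-φ)) ((a:ℝ)*Complex.I) with hw_def
  have hmo : w = ((C:ℂ)*((a:ℝ)*Complex.I) + ((-S:ℝ):ℂ)) / (((S:ℝ):ℂ)*((a:ℝ)*Complex.I) + ((C:ℝ):ℂ)) := by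
    rw [hw_def, moebius_kmat, Real.cos_neg, Real.sin_neg]
    simp only [Complex.ofReal_neg, neg_neg, ← hC_def, ← hS_def]
  have hden_normsq : Complex.normSq (((S:ℝ):ℂ)*((a:ℝ)*Complex.I) + ((C:ℝ):ℂ)) = D := by
    simp [Complex.normSq_apply]
    ring
  have hwre : w.re = (C*S*(a^2-1))/D := by
    rw [hmo, Complex.div_re, hden_normsq]
    simp
    ring
  have hwim : w.im = a/D := by
    rw [hmo, Complex.div_im, hden_normsq]
    simp
    field_simp
    linear_combination hcs
  have hzre : (((E:ℝ):ℂ) * w).re = E * ((C*S*(a^2-1))/D) := by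
    rw [Complex.re_ofReal_mul, hwre]
  have hzim : (((E:ℝ):ℂ) * w).im = E * (a/D) := by
    rw [Complex.im_ofReal_mul, hwim]
  have hzim_pos : (0:ℝ) < (((E:ℝ):ℂ) * w).im := by rw [hzim]; positivity
  obtain ⟨ρ, hρ0, hHz, hcosh⟩ := exists_polar H hinv (((E:ℝ):ℂ) * w) hzim_pos
  rw [hHz]
  apply hmono _ _ (abs_nonneg _)
  have he1 : Real.exp (r-s) = (a*E)⁻¹ := by
    rw [ha_def, hE_def, ← Real.exp_add, ← Real.exp_neg]
    congr 1
    ring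
  have he2 : Real.exp (-(r-s)) = a*E := by
    rw [ha_def, hE_def, ← Real.exp_add]
    congr 1
    ring
  have key : (C^2+S^2*a^2)^2 + E^2*(C^2*S^2*(a^2-1)^2 + a^2) - (1+E^2*a^2)*(C^2+S^2*a^2)
      = S^2*(1-a^2)*(C^2+S^2*a^2)*(E^2-1) := by
    linear_combination (C^2 + S^2*a^2 - E^2*a^2*(S^2*(1-a^2)+1)) * hcs
  have h1a : (0:ℝ) ≤ 1 - a^2 := by nlinarith
  have hE2 : (0:ℝ) ≤ E^2 - 1 := by nlinarith
  have hpos : 0 ≤ S^2*(1-a^2)*(C^2+S^2*a^2)*(E^2-1) :=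
    mul_nonneg (mul_nonneg (mul_nonneg (sq_nonneg S) h1a) hD.le) hE2
  have poly : (1+E^2*a^2)*D ≤ D^2 + E^2*(C^2*S^2*(a^2-1)^2+a^2) := by
    rw [hD_def]
    linarith [key, hpos]
  have hdiff : (1 + (E*(C*S*(a^2-1)/D))^2 + (E*(a/D))^2)/(2*(E*(a/D))) - ((a*E)⁻¹ + a*E)/2
      = (D^2 + E^2*(C^2*S^2*(a^2-1)^2+a^2) - (1+E^2*a^2)*D) / (2*E*a*D) := by
    field_simp
    ring
  have hcmp : Real.cosh |r-s| ≤ Real.cosh ρ := by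
    rw [Real.cosh_abs, Real.cosh_eq, hcosh, hzre, hzim, he1, he2]
    have h0 : (0:ℝ) ≤ (D^2 + E^2*(C^2*S^2*(a^2-1)^2+a^2) - (1+E^2*a^2)*D) / (2*E*a*D) :=
      div_nonneg (by linarith [poly]) (by positivity)
    linarith [hdiff, h0]
  have habs := Real.cosh_le_cosh.1 hcmp
  rwa [_root_.abs_abs, _root_.abs_of_nonneg hρ0] at habs

end
end

section
/- Suppose H : ℍ → ℝ is SO(2)-invariant with |H(e^{−r} i)| ≤ C₀ e^{−m₀ r} for all r ≥ 0, where m₀ > 1, and let δ ≥ 1. Then there is a constant C > 0 (depending only on C₀ and the uniform bound on P_{−1/2}) such that |H^δ(e^{−r} i)| ≤ C μ_δ(e^{−r} i) for all r ≥ 0, where μ_δ(e^{−r} i) = δ e^{−(m₀ − 1) δ r}. -/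
open MeasureTheory Real Complex Filter

section
open MeasureTheory Real Complex Filter

lemma aux_sinh_le {t : ℝ} (ht : 0 ≤ t) : Real.sinh t ≤ t * Real.exp t := by
  rw [Real.sinh_eq]
  have h1 : Real.exp (-t) = Real.exp t * Real.exp (-(2*t)) := by
    rw [← Real.exp_add]; ring_nf
  have h2 : 1 - 2*t ≤ Real.exp (-(2*t)) := by linarith [Real.add_one_le_exp (-(2*t))]
  nlinarith [Real.exp_pos t]

lemma aux_radl {r : ℝ} (hr : 0 ≤ r) :
    radl ((Real.exp (-r) : ℝ) * Complex.I) = r := by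
  have hc : coshDistI ((Real.exp (-r) : ℝ) * Complex.I) = Real.cosh r := by
    rw [coshDistI]
    simp only [Complex.mul_I_re, Complex.mul_I_im, Complex.ofReal_re, Complex.ofReal_im]
    rw [Real.cosh_eq, Real.exp_neg]
    have h := Real.exp_pos r
    field_simp
    ring
  have h2 : coshDistI ((Real.exp (-r) : ℝ) * Complex.I) ^ 2 - 1 = Real.sinh r ^ 2 := by
    rw [hc, Real.cosh_sq]; ring
  rw [radl, h2, Real.sqrt_sq (Real.sinh_nonneg_iff.mpr hr), hc, Real.cosh_add_sinh,
    Real.log_exp]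

end

section

section
open MeasureTheory Real Complex Filter

set_option maxHeartbeats 1000000 in
lemma aux_legendre_le_three {x : ℝ} (hx : 0 ≤ x) :
    |legendreR (-(1/2)) (Real.cosh x)| ≤ 3 := by
  have hπ := Real.pi_pos
  have hsq : Real.sqrt (Real.cosh x ^ 2 - 1) = Real.sinh x := by
    have h : Real.cosh x ^ 2 - 1 = Real.sinh x ^ 2 := by rw [Real.cosh_sq]; ring
    rw [h, Real.sqrt_sq (Real.sinh_nonneg_iff.mpr hx)]
  obtain ⟨b, hbdef⟩ : ∃ b : ℝ → ℝ, b = fun φ => Real.cosh x + Real.sinh x * Real.cos φ :=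
    ⟨_, rfl⟩
  have hbge : ∀ φ, Real.exp (-x) ≤ b φ := by
    intro φ
    have h1 := Real.cosh_sub_sinh x
    have h2 := Real.neg_one_le_cos φ
    have h3 : (0:ℝ) ≤ Real.sinh x := Real.sinh_nonneg_iff.mpr hx
    simp only [hbdef]
    nlinarith
  have hb0 : ∀ φ, 0 < b φ := fun φ => lt_of_lt_of_le (Real.exp_pos _) (hbge φ)
  have hgcont : Continuous fun φ => b φ ^ (-(1/2) : ℝ) := by
    simp only [hbdef]
    apply Continuous.rpow_const (by fun_prop)
    intro φ
    have := hb0 φ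
    rw [hbdef] at this
    exact Or.inl this.ne'
  have hgint : IntegrableOn (fun φ => b φ ^ (-(1/2):ℝ)) (Set.Ioo 0 (2*π)) :=
    (hgcont.integrableOn_Icc (a := 0) (b := 2*π)).mono_set Set.Ioo_subset_Icc_self
  have hgnn : ∀ φ, 0 ≤ b φ ^ (-(1/2):ℝ) := fun φ => Real.rpow_nonneg (hb0 φ).le _
  have hvol : (volume (Set.Ioo (0:ℝ) (2*π))).toReal = 2*π := by
    rw [Real.volume_Ioo, ENNReal.toReal_ofReal (by linarith), sub_zero]
  have hfin : volume (Set.Ioo (0:ℝ) (2*π)) < ⊤ := by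
    rw [Real.volume_Ioo]; exact ENNReal.ofReal_lt_top
  have hconst : ∀ C : ℝ, IntegrableOn (fun _ => C) (Set.Ioo (0:ℝ) (2*π)) :=
    fun C => integrableOn_const hfin.ne
  have hIconst : ∀ C : ℝ, (∫ _ in Set.Ioo (0:ℝ) (2*π), C) = 2*π*C := by
    intro C; rw [setIntegral_const, measureReal_def, hvol, smul_eq_mul]
  have key : (∫ φ in Set.Ioo (0:ℝ) (2*π), b φ ^ (-(1/2):ℝ)) ≤ 6 * π := by
    rcases le_total x 1 with hx1 | hx1
    · have hg2 : ∀ φ ∈ Set.Ioo (0:ℝ) (2*π), b φ ^ (-(1/2):ℝ) ≤ 2 := by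
        intro φ _
        have he1 : Real.exp 1 ≤ 4 := by nlinarith [Real.exp_one_lt_d9]
        have h4 : (1:ℝ)/4 ≤ b φ := by
          have h5 : Real.exp (-1) ≤ Real.exp (-x) := Real.exp_le_exp.mpr (by linarith)
          have h6 : (1:ℝ)/4 ≤ Real.exp (-1) := by
            rw [Real.exp_neg, show (1:ℝ)/4 = (4:ℝ)⁻¹ by norm_num]
            gcongr
          linarith [hbge φ]
        rw [Real.rpow_neg (hb0 φ).le, ← Real.sqrt_eq_rpow]
        have hs : (1:ℝ)/2 ≤ Real.sqrt (b φ) :=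
          (Real.le_sqrt (by norm_num) (hb0 φ).le).mpr (by nlinarith)
        have h7 := one_div_le_one_div_of_le (by norm_num : (0:ℝ) < 1/2) hs
        rw [show (1:ℝ)/(1/2) = 2 by norm_num] at h7
        simpa [one_div] using h7
      calc (∫ φ in Set.Ioo (0:ℝ) (2*π), b φ ^ (-(1/2):ℝ))
          ≤ ∫ _ in Set.Ioo (0:ℝ) (2*π), (2:ℝ) :=
            setIntegral_mono_on hgint (hconst 2) measurableSet_Ioo hg2
        _ = 2*π*2 := hIconst 2
        _ ≤ 6*π := by linarith
    · -- x ≥ 1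
      have hsinhpos : 0 < Real.sinh x := Real.sinh_pos_iff.mpr (by linarith)
      obtain ⟨ε, hεdef⟩ : ∃ ε : ℝ, ε = Real.exp (-x) := ⟨_, rfl⟩
      have hε : 0 < ε := hεdef ▸ Real.exp_pos _
      obtain ⟨a, hadef⟩ : ∃ a : ℝ, a = 2 * Real.sinh x / π^2 := ⟨_, rfl⟩
      have ha : 0 < a := by rw [hadef]; positivity
      obtain ⟨c, hcdef⟩ : ∃ c : ℝ, c = Real.sqrt (a / ε) := ⟨_, rfl⟩
      have hc : 0 < c := hcdef ▸ Real.sqrt_pos.mpr (div_pos ha hε)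
      have hc2 : c^2 = a/ε := by rw [hcdef]; exact Real.sq_sqrt (div_pos ha hε).le
      have h2s : Real.exp (-x) * (2 * Real.sinh x) = 1 - Real.exp (-(2*x)) := by
        have e1 : Real.exp (-x) * Real.exp x = 1 := by rw [← Real.exp_add]; simp
        have e2 : Real.exp (-x) * Real.exp (-x) = Real.exp (-(2*x)) := by
          rw [← Real.exp_add]; ring_nf
        rw [Real.sinh_eq]
        linear_combination e1 - e2
      have hεa : ε * a = (1 - Real.exp (-(2*x)))/π^2 := by
        rw [← h2s, hεdef, hadef]; ring
      have haux_pos : ∀ φ : ℝ, 0 < ε + a*(φ-π)^2 := by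
        intro φ
        have := mul_nonneg ha.le (sq_nonneg (φ-π))
        linarith
      have hfuneq : (fun φ:ℝ => (ε + a*(φ-π)^2)⁻¹)
          = fun φ => ε⁻¹ * (1 + (c*(φ-π))^2)⁻¹ := by
        funext φ
        rw [← mul_inv]
        congr 1
        rw [mul_pow, hc2]
        field_simp
      have hint_h : Integrable (fun φ:ℝ => (ε + a*(φ-π)^2)⁻¹) := by
        rw [hfuneq]
        exact ((integrable_inv_one_add_sq.comp_mul_left' hc.ne').comp_sub_right π).const_mul _
      have hint_val : (∫ φ:ℝ, (ε + a*(φ-π)^2)⁻¹) = π / (ε * c) := by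
        rw [hfuneq, MeasureTheory.integral_const_mul,
          MeasureTheory.integral_sub_right_eq_self (fun y => (1 + (c*y)^2)⁻¹) π,
          MeasureTheory.Measure.integral_comp_mul_left (fun y => (1 + y^2)⁻¹) c,
          integral_univ_inv_one_add_sq, abs_of_pos (inv_pos.mpr hc), smul_eq_mul]
        field_simp
      have hεc : ε * c = Real.sqrt (ε * a) := by
        have h9 : (ε*c)^2 = ε*a := by
          rw [mul_pow, hc2]
          field_simp
        rw [← h9, Real.sqrt_sq (mul_pos hε hc).le]
      have hnum : π / (ε * c) ≤ 12 := by
        rw [hεc, hεa]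
        have hπ2 : π^2 ≤ 10 := by nlinarith [Real.pi_lt_d2, Real.pi_gt_three]
        have h2x : Real.exp (-(2*x)) ≤ 1/4 := by
          have h5 : Real.exp (-(2*x)) ≤ Real.exp (-2) := Real.exp_le_exp.mpr (by linarith)
          have he2 : (4:ℝ) ≤ Real.exp 2 := by
            have h7 : Real.exp 2 = Real.exp 1 * Real.exp 1 := by rw [← Real.exp_add]; norm_num
            nlinarith [Real.exp_one_gt_d9]
          have h6 : Real.exp (-2) ≤ 1/4 := by
            rw [Real.exp_neg]
            rw [show (1:ℝ)/4 = (4:ℝ)⁻¹ by norm_num]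
            gcongr
          linarith
        have hD : (π/12)^2 ≤ (1 - Real.exp (-(2*x)))/π^2 := by
          rw [le_div_iff₀ (by positivity)]
          nlinarith [hπ2, h2x]
        have hsd : π/12 ≤ Real.sqrt ((1 - Real.exp (-(2*x)))/π^2) :=
          (Real.le_sqrt (by positivity) (le_trans (by positivity) hD)).mpr hD
        have hspos : (0:ℝ) < Real.sqrt ((1 - Real.exp (-(2*x)))/π^2) :=
          lt_of_lt_of_le (by positivity) hsd
        rw [div_le_iff₀ hspos]
        linarith
      have hbound1 : ∀ φ ∈ Set.Ioo (0:ℝ) (2*π),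
          b φ ^ (-(1/2):ℝ) ≤ (1 + (b φ)⁻¹)/2 := by
        intro φ _
        have hb := hb0 φ
        have hs : 0 < Real.sqrt (b φ) := Real.sqrt_pos.mpr hb
        have hs2 : Real.sqrt (b φ) ^ 2 = b φ := Real.sq_sqrt hb.le
        rw [Real.rpow_neg hb.le, ← Real.sqrt_eq_rpow]
        have e4 : (b φ)⁻¹ = ((Real.sqrt (b φ))⁻¹)^2 := by
          rw [inv_pow, hs2]
        rw [e4]
        nlinarith [sq_nonneg ((Real.sqrt (b φ))⁻¹ - 1)]
      have hbound2 : ∀ φ ∈ Set.Ioo (0:ℝ) (2*π),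
          (b φ)⁻¹ ≤ (ε + a*(φ-π)^2)⁻¹ := by
        intro φ hφ
        obtain ⟨hφ0, hφ2⟩ := hφ
        have hjordan : 2/π * |(π - φ)/2| ≤ |Real.sin ((π-φ)/2)| := by
          rcases le_total 0 ((π-φ)/2) with hu | hu
          · rw [_root_.abs_of_nonneg hu]
            exact le_trans (Real.mul_le_sin hu (by linarith)) (le_abs_self _)
          · have hj := Real.mul_le_sin (x := -((π-φ)/2)) (by linarith) (by linarith)
            rw [Real.sin_neg] at hj
            rw [_root_.abs_of_nonpos hu]
            refine le_trans (by linarith) (neg_le_abs (Real.sin ((π-φ)/2)))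
        have hsin : Real.sin ((π - φ)/2) = Real.cos (φ/2) := by
          rw [show (π - φ)/2 = π/2 - φ/2 by ring, Real.sin_pi_div_two_sub]
        have hcossq : Real.cos (φ/2)^2 = (1 + Real.cos φ)/2 := by
          rw [Real.cos_sq, show 2*(φ/2) = φ by ring]
          ring
        have hcos : 2*(φ-π)^2/π^2 ≤ 1 + Real.cos φ := by
          have hj2 : (2/π * |(π - φ)/2|)^2 ≤ Real.sin ((π-φ)/2)^2 := by
            rw [← _root_.sq_abs (Real.sin _)]
            exact pow_le_pow_left₀ (by positivity) hjordan 2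
          rw [hsin, hcossq, mul_pow, _root_.sq_abs] at hj2
          have h8 : (2/π)^2 * ((π-φ)/2)^2 = (φ-π)^2/π^2 := by
            field_simp; ring
          rw [h8] at hj2
          rw [div_le_iff₀ (by positivity : (0:ℝ) < π^2)] at hj2 ⊢
          nlinarith [hj2]
        have hb_ge : ε + a*(φ-π)^2 ≤ b φ := by
          have h1 : Real.cosh x = ε + Real.sinh x := by
            rw [hεdef, ← Real.cosh_sub_sinh x]; ring
          have h2 : a*(φ-π)^2 ≤ Real.sinh x * (1 + Real.cos φ) := by
            have h3 : a*(φ-π)^2 = Real.sinh x * (2*(φ-π)^2/π^2) := by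
              rw [hadef]; field_simp
            rw [h3]; exact mul_le_mul_of_nonneg_left hcos hsinhpos.le
          simp only [hbdef]
          nlinarith [h1, h2]
        have hpos : (0:ℝ) < ε + a*(φ-π)^2 := haux_pos φ
        have := one_div_le_one_div_of_le hpos hb_ge
        simpa [one_div] using this
      have hbinv_cont : Continuous fun φ => (b φ)⁻¹ := by
        simp only [hbdef]
        apply Continuous.inv₀ (by fun_prop)
        intro φ
        have := hb0 φ
        rw [hbdef] at this
        exact this.ne'
      have hbinv_int : IntegrableOn (fun φ => (b φ)⁻¹) (Set.Ioo 0 (2*π)) :=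
        (hbinv_cont.integrableOn_Icc (a := 0) (b := 2*π)).mono_set Set.Ioo_subset_Icc_self
      have hJ : (∫ φ in Set.Ioo (0:ℝ) (2*π), (b φ)⁻¹) ≤ 12 := by
        calc (∫ φ in Set.Ioo (0:ℝ) (2*π), (b φ)⁻¹)
            ≤ ∫ φ in Set.Ioo (0:ℝ) (2*π), (ε + a*(φ-π)^2)⁻¹ :=
              setIntegral_mono_on hbinv_int hint_h.integrableOn measurableSet_Ioo hbound2
          _ ≤ ∫ φ : ℝ, (ε + a*(φ-π)^2)⁻¹ :=
              setIntegral_le_integral hint_h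
                (ae_of_all _ fun φ => inv_nonneg.mpr (haux_pos φ).le)
          _ = π / (ε * c) := hint_val
          _ ≤ 12 := hnum
      calc (∫ φ in Set.Ioo (0:ℝ) (2*π), b φ ^ (-(1/2):ℝ))
          ≤ ∫ φ in Set.Ioo (0:ℝ) (2*π), (1 + (b φ)⁻¹)/2 :=
            setIntegral_mono_on hgint (((hconst 1).add hbinv_int).div_const 2)
              measurableSet_Ioo hbound1
        _ = ((∫ _ in Set.Ioo (0:ℝ) (2*π), (1:ℝ)) + ∫ φ in Set.Ioo (0:ℝ) (2*π), (b φ)⁻¹)/2 := by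
            rw [integral_div, integral_add (hconst 1) hbinv_int]
        _ ≤ (2*π*1 + 12)/2 := by
            rw [hIconst 1]
            linarith
        _ ≤ 6*π := by nlinarith [Real.pi_gt_three]
  have hI0 : 0 ≤ ∫ φ in Set.Ioo (0:ℝ) (2*π), b φ ^ (-(1/2):ℝ) :=
    setIntegral_nonneg measurableSet_Ioo fun φ _ => hgnn φ
  have hbeq : ∀ φ, Real.cosh x + Real.sinh x * Real.cos φ = b φ := fun φ => by rw [hbdef]
  rw [legendreR, hsq]
  simp only [hbeq]
  rw [_root_.abs_of_nonneg (mul_nonneg (by positivity) hI0)]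
  rw [div_mul_eq_mul_div, one_mul, div_le_iff₀ (by positivity)]
  calc (∫ φ in Set.Ioo (0:ℝ) (2*π), b φ ^ (-(1/2):ℝ)) ≤ 6*π := key
    _ = 3 * (2*π) := by ring

end

section
open MeasureTheory Real Complex Filter

/-- **Lemma B.8.** If `H` is `SO(2)`-invariant with `|H(e^{−r}i)| ≤ C₀ e^{−m₀ r}`, `m₀ > 1`,
then there is `C > 0` (independent of `δ`) with
`|H^δ(e^{−r}i)| ≤ C μ_δ(e^{−r}i) = C δ e^{−(m₀−1)δr}` for all `δ ≥ 1`, `r ≥ 0`. -/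
theorem dilate_pointwise_bound
    (H : ℂ → ℝ) (hinv : SO2Invariant H)
    (C₀ m₀ : ℝ) (hC₀ : 0 < C₀) (hm₀ : 1 < m₀)
    (hH : ∀ r : ℝ, 0 ≤ r →
      |H ((Real.exp (-r) : ℝ) * Complex.I)| ≤ C₀ * Real.exp (-m₀ * r)) :
    ∃ C > 0, ∀ δ : ℝ, 1 ≤ δ → ∀ r : ℝ, 0 ≤ r →
      |dilate H δ ((Real.exp (-r) : ℝ) * Complex.I)| ≤
        C * (δ * Real.exp (-(m₀ - 1) * δ * r)) := by
  refine ⟨3 * C₀, by positivity, ?_⟩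
  intro δ hδ r hr
  have hδ0 : 0 < δ := lt_of_lt_of_le one_pos hδ
  have hrad : radl ((Real.exp (-r):ℝ) * Complex.I) = r := aux_radl hr
  simp only [dilate, hrad]
  rcases eq_or_lt_of_le hr with heq | hrpos
  · simp only [← heq, mul_zero, Real.sinh_zero, div_zero, zero_mul, mul_zero, abs_zero]
    positivity
  · have hδr : 0 ≤ δ * r := by positivity
    rw [abs_mul, abs_mul]
    have h1 : |H ((Real.exp (-(δ*r)):ℝ) * Complex.I)| ≤ C₀ * Real.exp (-m₀*(δ*r)) :=
      hH (δ*r) hδr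
    have h2 : |Real.sinh (δ*r)/Real.sinh r| ≤ δ * Real.exp (δ*r) := by
      rw [_root_.abs_of_nonneg (div_nonneg (Real.sinh_nonneg_iff.mpr hδr)
        (Real.sinh_nonneg_iff.mpr hr))]
      rw [div_le_iff₀ (Real.sinh_pos_iff.mpr hrpos)]
      calc Real.sinh (δ*r) ≤ (δ*r) * Real.exp (δ*r) := aux_sinh_le hδr
        _ ≤ δ * Real.exp (δ*r) * Real.sinh r := by
            have hr_le : r ≤ Real.sinh r := Real.self_le_sinh_iff.mpr hr
            nlinarith [mul_le_mul_of_nonneg_left hr_le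
              (by positivity : (0:ℝ) ≤ δ * Real.exp (δ*r))]
    have h3 : |legendreR (-(1/2)) (Real.cosh (δ*r))| ≤ 3 := aux_legendre_le_three hδr
    calc |H ((Real.exp (-(δ*r)):ℝ) * Complex.I)| * |Real.sinh (δ*r)/Real.sinh r| *
          |legendreR (-(1/2)) (Real.cosh (δ*r))|
        ≤ (C₀ * Real.exp (-m₀*(δ*r))) * (δ * Real.exp (δ*r)) * 3 :=
          mul_le_mul (mul_le_mul h1 h2 (abs_nonneg _) (by positivity)) h3
            (abs_nonneg _) (by positivity)
      _ = 3 * C₀ * (δ * Real.exp (-(m₀-1)*δ*r)) := by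
          rw [show -(m₀-1)*δ*r = -m₀*(δ*r) + δ*r by ring, Real.exp_add]
          ring


end
end
end

section
/- Let f_ε be a bi-invariant probability density on SL(2,ℝ), identified with an SO(2)-invariant nonnegative function on ℍ with 2π ∫_0^∞ f_ε(e^{−s}i) sinh s ds = 1, and suppose ∫_{r−ξ₀r}^{r+ξ₀r} f_ε(e^{−s} i) sinh s ds ≤ C e^{−(ξ−ξ₀) r} for all r > 0, where 0 < ξ₀ < 1 and ξ > 1 + ξ₀. Let H : ℍ → ℝ be SO(2)-invariant such that H(e^{−r} i) is bounded, monotonically decreasing in r, and satisfies H(e^{−r} i) ≤ C e^{−m₀ r} with m₀ ξ₀ > ξ. Then there is a constant C' > 0 such that for every δ ≥ 1 and every r > 0, (f_ε * H^δ)(e^{−r} i) ≤ C' δ e^{−(ξ − ξ₀) r}. -/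
open MeasureTheory Real Complex Filter

section Helpers
open MeasureTheory Real Filter Set

lemma cosIntegral (a b : ℝ) (hb : 0 ≤ b) (ha2 : a^2 = 1 + b^2) (ha : 0 < a) :
    ∫ φ in Set.Ioo (0:ℝ) (2*π), (a + b * Real.cos φ)⁻¹ = 2*π := by
  have hba : b < a := by nlinarith
  have hpos : ∀ x : ℝ, 0 < a + b * Real.cos x := by
    intro x
    nlinarith [Real.neg_one_le_cos x, Real.cos_le_one x]
  have hpos2 : ∀ x : ℝ, 0 < 1 + a + b * Real.cos x := fun x => by nlinarith [hpos x]
  have hderiv : ∀ x : ℝ, HasDerivAt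
      (fun y => y - 2 * Real.arctan (b * Real.sin y / (1 + a + b * Real.cos y)))
      ((a + b * Real.cos x)⁻¹) x := by
    intro x
    have hd0 : (1 + a + b * Real.cos x) ≠ 0 := (hpos2 x).ne'
    have hu : HasDerivAt (fun y => b * Real.sin y / (1 + a + b * Real.cos y))
        ((b * Real.cos x * (1 + a + b * Real.cos x) - b * Real.sin x * (b * (-Real.sin x))) /
          (1 + a + b * Real.cos x)^2) x := by
      exact (((Real.hasDerivAt_sin x).const_mul b).div
        (((Real.hasDerivAt_cos x).const_mul b).const_add (1+a)) hd0)
    have h2 := ((hu.arctan).const_mul 2)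
    have h3 := (hasDerivAt_id' x).sub h2
    refine h3.congr_deriv ?_
    have hs := Real.sin_sq_add_cos_sq x
    have h0 : a + b * Real.cos x ≠ 0 := (hpos x).ne'
    field_simp
    ring_nf
    linear_combination (1+a+b*Real.cos x) * (ha2 - b^2 * hs)
  have hcont : Continuous fun x : ℝ => (a + b * Real.cos x)⁻¹ :=
    Continuous.inv₀ (by continuity) (fun x => (hpos x).ne')
  have h2π : (0:ℝ) ≤ 2*π := by positivity
  have := intervalIntegral.integral_eq_sub_of_hasDerivAt (f := fun y =>
      y - 2 * Real.arctan (b * Real.sin y / (1 + a + b * Real.cos y)))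
      (fun x _ => hderiv x) (hcont.intervalIntegrable 0 (2*π))
  rw [← MeasureTheory.integral_Ioc_eq_integral_Ioo, ← intervalIntegral.integral_of_le h2π, this]
  simp [Real.sin_two_pi]

lemma integrableOn_Ioo_of_continuous {f : ℝ → ℝ} (hf : Continuous f) (a b : ℝ) :
    MeasureTheory.IntegrableOn f (Set.Ioo a b) :=
  (hf.integrableOn_Icc).mono_set Set.Ioo_subset_Icc_self

lemma amgm_inv_sqrt {u : ℝ} (hu : 0 < u) : u ^ (-(1/2) : ℝ) ≤ (1 + u⁻¹)/2 := by
  have hs : 0 < Real.sqrt u := Real.sqrt_pos.2 hu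
  have h1 : u ^ (-(1/2) : ℝ) = (Real.sqrt u)⁻¹ := by
    rw [Real.rpow_neg hu.le, Real.sqrt_eq_rpow]
  have e : (1 + u⁻¹)/2 = (1+u)/(2*u) := by field_simp; ring
  rw [h1, e, inv_eq_one_div, div_le_div_iff₀ hs (by positivity)]
  nlinarith [mul_nonneg hs.le (sq_nonneg (Real.sqrt u - 1)), Real.sq_sqrt hu.le]

lemma cosh_sqrt (t : ℝ) (ht : 0 ≤ t) :
    Real.sqrt (Real.cosh t ^ 2 - 1) = Real.sinh t := by
  have h : Real.cosh t ^ 2 - 1 = Real.sinh t ^ 2 := by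
    have := Real.cosh_sq t; linarith
  rw [h, Real.sqrt_sq (by simpa using Real.sinh_nonneg_iff.2 ht)]

lemma legendre_base_pos (t φ : ℝ) (ht : 0 ≤ t) :
    0 < Real.cosh t + Real.sinh t * Real.cos φ := by
  have h1 := Real.cosh_sub_sinh t
  have h2 := Real.exp_pos (-t)
  have h3 : 0 ≤ Real.sinh t := by simpa using Real.sinh_nonneg_iff.2 ht
  nlinarith [Real.neg_one_le_cos φ, Real.cos_le_one φ]

lemma legendreR_half_nonneg (t : ℝ) (ht : 0 ≤ t) :
    0 ≤ legendreR (-(1/2)) (Real.cosh t) := by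
  rw [legendreR]
  refine mul_nonneg (by positivity) ?_
  refine MeasureTheory.setIntegral_nonneg measurableSet_Ioo fun φ _ => ?_
  refine Real.rpow_nonneg ?_ _
  rw [cosh_sqrt t ht]
  exact (legendre_base_pos t φ ht).le

lemma legendreR_half_le_one (t : ℝ) (ht : 0 ≤ t) :
    legendreR (-(1/2)) (Real.cosh t) ≤ 1 := by
  have hb : 0 ≤ Real.sinh t := by simpa using Real.sinh_nonneg_iff.2 ht
  have ha2 : Real.cosh t ^ 2 = 1 + Real.sinh t ^ 2 := Real.cosh_sq' t
  have ha : 0 < Real.cosh t := Real.cosh_pos t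
  rw [legendreR, cosh_sqrt t ht]
  set a := Real.cosh t
  set b := Real.sinh t
  have hpos : ∀ φ : ℝ, 0 < a + b * Real.cos φ := fun φ => legendre_base_pos t φ ht
  have hc1 : Continuous fun φ : ℝ => (a + b * Real.cos φ) ^ (-(1/2):ℝ) := by
    apply Continuous.rpow_const (by continuity)
    exact fun φ => Or.inl (hpos φ).ne'
  have hc2 : Continuous fun φ : ℝ => (1 + (a + b * Real.cos φ)⁻¹)/2 :=
    (continuous_const.add ((by continuity : Continuous fun φ:ℝ => a + b*Real.cos φ).inv₀
      fun φ => (hpos φ).ne')).div_const 2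
  have hmono := MeasureTheory.setIntegral_mono_on
      (integrableOn_Ioo_of_continuous hc1 0 (2*π)) (integrableOn_Ioo_of_continuous hc2 0 (2*π))
      measurableSet_Ioo (fun φ _ => amgm_inv_sqrt (hpos φ))
  have hval : (∫ φ in Set.Ioo (0:ℝ) (2*π), (1 + (a + b * Real.cos φ)⁻¹)/2) = 2*π := by
    have hsplit : ∀ φ:ℝ, (1 + (a + b*Real.cos φ)⁻¹)/2
        = 1/2 + (a + b*Real.cos φ)⁻¹ * (1/2) := fun φ => by ring
    simp_rw [hsplit]
    rw [MeasureTheory.integral_add (f := fun _ => (1/2:ℝ)) (g := fun φ => (a + b*Real.cos φ)⁻¹ * (1/2))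
      (integrableOn_Ioo_of_continuous continuous_const 0 (2*π)) ((integrableOn_Ioo_of_continuous
      ((by continuity : Continuous fun φ:ℝ => a + b*Real.cos φ).inv₀
        fun φ => (hpos φ).ne') 0 (2*π)).mul_const _)]
    rw [MeasureTheory.integral_mul_const, cosIntegral a b hb ha2 ha]
    simp [Real.volume_Ioo]
    rw [max_eq_left (by positivity)]
    ring
  calc (1/(2*π)) * ∫ φ in Set.Ioo (0:ℝ) (2*π), (a + b * Real.cos φ) ^ (-(1/2):ℝ)
      ≤ (1/(2*π)) * ∫ φ in Set.Ioo (0:ℝ) (2*π), (1 + (a + b * Real.cos φ)⁻¹)/2 := by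
        refine mul_le_mul_of_nonneg_left hmono (by positivity)
    _ = 1 := by rw [hval]; field_simp

lemma sinh_dilate_le {ρ δ : ℝ} (hρ : 0 ≤ ρ) (hδ : 1 ≤ δ) :
    Real.sinh (δ * ρ) ≤ δ * Real.exp ((δ - 1) * ρ) * Real.sinh ρ := by
  have hδ0 : 0 < δ := by linarith
  have key : Real.exp ((δ-2)*ρ) ≤ (δ-1)/δ * Real.exp (δ*ρ) + 1/δ * Real.exp (-(δ*ρ)) := by
    have h := Real.geom_mean_le_arith_mean2_weighted
      (w₁ := (δ-1)/δ) (w₂ := 1/δ) (p₁ := Real.exp (δ*ρ)) (p₂ := Real.exp (-(δ*ρ)))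
      (div_nonneg (by linarith) hδ0.le) (by positivity)
      (Real.exp_pos _).le (Real.exp_pos _).le (by field_simp; ring)
    calc Real.exp ((δ-2)*ρ)
        = Real.exp (δ*ρ) ^ ((δ-1)/δ) * Real.exp (-(δ*ρ)) ^ (1/δ) := by
          rw [← Real.exp_mul, ← Real.exp_mul, ← Real.exp_add]
          congr 1
          field_simp
          ring
      _ ≤ _ := h
  have eA : Real.exp ((δ-1)*ρ) * Real.exp ρ = Real.exp (δ*ρ) := by
    rw [← Real.exp_add]; congr 1; ring
  have eB : Real.exp ((δ-1)*ρ) * Real.exp (-ρ) = Real.exp ((δ-2)*ρ) := by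
    rw [← Real.exp_add]; congr 1; ring
  have key2 : δ * Real.exp ((δ-2)*ρ) ≤ (δ-1) * Real.exp (δ*ρ) + Real.exp (-(δ*ρ)) := by
    have h := mul_le_mul_of_nonneg_left key hδ0.le
    calc δ * Real.exp ((δ-2)*ρ) ≤ δ * ((δ-1)/δ * Real.exp (δ*ρ) + 1/δ * Real.exp (-(δ*ρ))) := h
      _ = (δ-1) * Real.exp (δ*ρ) + Real.exp (-(δ*ρ)) := by field_simp; try ring
  rw [Real.sinh_eq, Real.sinh_eq]
  have expand : δ * Real.exp ((δ-1)*ρ) * ((Real.exp ρ - Real.exp (-ρ))/2)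
      = (δ * Real.exp (δ*ρ) - δ * Real.exp ((δ-2)*ρ))/2 := by
    rw [← eA, ← eB]; ring
  rw [expand]
  linarith [key2]

lemma kmat_moebius_neg (φ : ℝ) (w : ℂ) :
    moebius (kmat (-φ)) w = ((Real.cos φ : ℂ) * w - (Real.sin φ : ℂ)) /
      ((Real.sin φ : ℂ) * w + (Real.cos φ : ℂ)) := by
  rw [moebius, kmat]
  simp [Real.cos_neg, Real.sin_neg]
  ring_nf

lemma point_re_im (E X c s : ℝ) (hpy : s^2 + c^2 = 1) (hD : 0 < c^2 + s^2*X^2) :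
    ((E:ℂ) * (((c:ℂ) * ((X:ℂ) * Complex.I) - (s:ℂ)) / ((s:ℂ) * ((X:ℂ) * Complex.I) + (c:ℂ)))).re
      = E*(c*s*(X^2-1))/(c^2+s^2*X^2) ∧
    ((E:ℂ) * (((c:ℂ) * ((X:ℂ) * Complex.I) - (s:ℂ)) / ((s:ℂ) * ((X:ℂ) * Complex.I) + (c:ℂ)))).im
      = E*X/(c^2+s^2*X^2) := by
  have hD' : c^2 + s^2*X^2 ≠ 0 := hD.ne'
  have hd : ((s:ℂ) * ((X:ℂ) * Complex.I) + (c:ℂ)) ≠ 0 := by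
    intro h
    have h1 := congrArg Complex.re h
    have h2 := congrArg Complex.im h
    simp [Complex.add_re, Complex.add_im, Complex.mul_re, Complex.mul_im] at h1 h2
    apply hD'
    rw [h1]
    rcases h2 with h2 | h2 <;> rw [h2] <;> ring
  have key : (E:ℂ) * (((c:ℂ) * ((X:ℂ) * Complex.I) - (s:ℂ)) / ((s:ℂ) * ((X:ℂ) * Complex.I) + (c:ℂ)))
      = Complex.mk (E*(c*s*(X^2-1))/(c^2+s^2*X^2)) (E*X/(c^2+s^2*X^2)) := by
    rw [mul_div_assoc', div_eq_iff hd]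
    apply Complex.ext
    · simp [Complex.mul_re, Complex.mul_im, Complex.add_re, Complex.add_im]
      field_simp
      linear_combination (-(E*s*X^2))*hpy
    · simp [Complex.mul_re, Complex.mul_im, Complex.add_re, Complex.add_im]
      rw [div_mul_eq_mul_div, div_mul_eq_mul_div, ← add_div, eq_div_iff hD']
      linear_combination (E*c*X)*hpy
  constructor <;> rw [key]

lemma radl_lower (r s φ : ℝ) (hr : 0 < r) (hs : 0 < s) :
    |s - r| ≤ radl ((Real.exp s : ℝ) * moebius (kmat (-φ)) ((Real.exp (-r) : ℝ) * Complex.I)) := by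
  set X := Real.exp (-r) with hXdef
  set E := Real.exp s with hEdef
  set cφ := Real.cos φ with hcdef
  set sφ := Real.sin φ with hsdef
  have hX : 0 < X := Real.exp_pos _
  have hX1 : X ≤ 1 := Real.exp_le_one_iff.2 (by linarith)
  have hE : 1 ≤ E := Real.one_le_exp_iff.2 hs.le
  have hpy : sφ^2 + cφ^2 = 1 := Real.sin_sq_add_cos_sq φ
  have hX2 : X^2 ≤ 1 := by nlinarith
  have hD : 0 < cφ^2 + sφ^2 * X^2 := by
    nlinarith [sq_nonneg cφ, sq_nonneg sφ, mul_pos hX hX,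
      mul_nonneg (sq_nonneg cφ) (sub_nonneg.2 hX2)]
  have hre : ((E : ℝ) * moebius (kmat (-φ)) ((X : ℝ) * Complex.I) : ℂ).re
      = E*(cφ*sφ*(X^2-1))/(cφ^2+sφ^2*X^2) := by
    rw [kmat_moebius_neg]
    exact (point_re_im E X cφ sφ hpy hD).1
  have him : ((E : ℝ) * moebius (kmat (-φ)) ((X : ℝ) * Complex.I) : ℂ).im
      = E*X/(cφ^2+sφ^2*X^2) := by
    rw [kmat_moebius_neg]
    exact (point_re_im E X cφ sφ hpy hD).2
  have hEX : Real.exp (s - r) = E * X := by rw [← Real.exp_add]; congr 1; try ring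
  have hEX' : Real.exp (-(s - r)) = (E*X)⁻¹ := by
    rw [← hEX, ← Real.exp_neg]
  have hcosh : Real.cosh (s - r) ≤ coshDistI ((E : ℝ) * moebius (kmat (-φ)) ((X : ℝ) * Complex.I)) := by
    have hfac : 0 ≤ sφ^2 * (1-X^2)*(E^2-1)/(2*E*X) := by
      have h1 : (0:ℝ) ≤ sφ^2 * (1-X^2)*(E^2-1) :=
        mul_nonneg (mul_nonneg (sq_nonneg sφ) (by nlinarith)) (by nlinarith)
      positivity
    have key : coshDistI ((E : ℝ) * moebius (kmat (-φ)) ((X : ℝ) * Complex.I))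
        - Real.cosh (s - r) = sφ^2 * (1-X^2)*(E^2-1)/(2*E*X) := by
      rw [coshDistI, hre, him, Real.cosh_eq, hEX, hEX']
      rw [inv_eq_one_div]
      field_simp
      ring_nf
      linear_combination (cφ^2 + 1 - sφ^2 + 2*sφ^2*X^2 + E^2*sφ^2*(1-X^2)^2 - (E^2*X^2+1) - sφ^2*(1-X^2)*(E^2-1)) * hpy
    linarith [key, hfac]
  set c := coshDistI ((E : ℝ) * moebius (kmat (-φ)) ((X : ℝ) * Complex.I))
  have hc1 : 1 ≤ c := le_trans (Real.one_le_cosh (s-r)) hcosh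
  have h4 : Real.exp |s-r| ≤ c + Real.sqrt (c^2 - 1) := by
    have e5 : Real.exp |s-r| = Real.cosh (s-r) + Real.sqrt (Real.cosh (s-r)^2 - 1) := by
      rw [← Real.cosh_add_sinh |s-r|, ← cosh_sqrt |s-r| (abs_nonneg _), Real.cosh_abs]
    rw [e5]
    have hsq : Real.cosh (s-r)^2 - 1 ≤ c^2 - 1 := by
      nlinarith [Real.one_le_cosh (s-r)]
    exact add_le_add hcosh (Real.sqrt_le_sqrt hsq)
  have h5 := Real.log_le_log (Real.exp_pos _) h4
  rw [Real.log_exp] at h5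
  exact h5

lemma dilate_bound (H : ℂ → ℝ) (C m₀ δ : ℝ) (hC : 0 < C) (hm : 1 < m₀) (hδ : 1 ≤ δ)
    (hHtail : ∀ r : ℝ, 0 ≤ r → H ((Real.exp (-r) : ℝ) * Complex.I) ≤ C * Real.exp (-m₀ * r))
    (z : ℂ) (hρ : 0 ≤ radl z) :
    dilate H δ z ≤ C * δ * Real.exp (-(m₀-1) * radl z) := by
  have hδ0 : (0:ℝ) < δ := by linarith
  rcases eq_or_lt_of_le hρ with h0 | h0
  · rw [dilate, ← h0]
    simp
    positivity
  · have hsρ : 0 < Real.sinh (radl z) := Real.sinh_pos_iff.2 h0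
    have hδρ : 0 ≤ δ * radl z := by positivity
    rw [dilate]
    have hratio : 0 ≤ Real.sinh (δ * radl z) / Real.sinh (radl z) :=
      div_nonneg (by simpa using Real.sinh_nonneg_iff.2 hδρ) hsρ.le
    have hP0 : 0 ≤ legendreR (-(1/2)) (Real.cosh (δ * radl z)) := legendreR_half_nonneg _ hδρ
    have hP1 : legendreR (-(1/2)) (Real.cosh (δ * radl z)) ≤ 1 := legendreR_half_le_one _ hδρ
    have hH := hHtail (δ * radl z) hδρ
    have hexp0 : (0:ℝ) ≤ C * Real.exp (-m₀ * (δ * radl z)) := by positivity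
    calc H ((Real.exp (-(δ * radl z)) : ℝ) * Complex.I) * (Real.sinh (δ * radl z) / Real.sinh (radl z))
          * legendreR (-(1/2)) (Real.cosh (δ * radl z))
        ≤ (C * Real.exp (-m₀ * (δ * radl z))) * (Real.sinh (δ * radl z) / Real.sinh (radl z))
          * legendreR (-(1/2)) (Real.cosh (δ * radl z)) := by
          exact mul_le_mul_of_nonneg_right (mul_le_mul_of_nonneg_right hH hratio) hP0
      _ ≤ (C * Real.exp (-m₀ * (δ * radl z))) * (Real.sinh (δ * radl z) / Real.sinh (radl z)) * 1 := by
          exact mul_le_mul_of_nonneg_left hP1 (mul_nonneg hexp0 hratio)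
      _ ≤ (C * Real.exp (-m₀ * (δ * radl z))) * (δ * Real.exp ((δ-1) * radl z)) * 1 := by
          refine mul_le_mul_of_nonneg_right (mul_le_mul_of_nonneg_left ?_ hexp0) (by norm_num)
          rw [div_le_iff₀ hsρ]
          calc Real.sinh (δ * radl z) ≤ δ * Real.exp ((δ-1) * radl z) * Real.sinh (radl z) :=
                sinh_dilate_le hρ hδ
            _ = _ := by ring
      _ = C * δ * Real.exp (-m₀ * (δ * radl z) + (δ-1) * radl z) := by
          rw [Real.exp_add]; ring
      _ ≤ C * δ * Real.exp (-(m₀-1) * radl z) := by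
          refine mul_le_mul_of_nonneg_left (Real.exp_le_exp.2 ?_) (by positivity)
          nlinarith [mul_nonneg (mul_nonneg (sub_nonneg.2 hδ) (sub_nonneg.2 hm.le)) hρ]

end Helpers

section
open MeasureTheory Real Complex Filter

/-- **Lemma B.9.** If the bi-invariant density `f_ε` has the band-mass bound
`∫_{r−ξ₀r}^{r+ξ₀r} f_ε(e^{−s}i) sinh s ds ≤ C e^{−(ξ−ξ₀)r}` for `0 < ξ₀ < 1`, `ξ > 1+ξ₀`,
and `H` is `SO(2)`-invariant, bounded, monotonically decreasing in `r` with
`H(e^{−r}i) ≤ C e^{−m₀ r}` for `m₀ ξ₀ > ξ`, then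
`(f_ε * H^δ)(e^{−r}i) ≤ C' δ e^{−(ξ−ξ₀)r}` for all `δ ≥ 1`, `r > 0`. -/
theorem conv_dilate_pointwise_decay
    (fε H : ℂ → ℝ)
    (hεinv : SO2Invariant fε) (hεpos : ∀ z, 0 ≤ fε z)
    (hεnorm : 2 * π *
      ∫ s in Set.Ioi (0:ℝ), fε ((Real.exp (-s) : ℝ) * Complex.I) * Real.sinh s = 1)
    (ξ₀ ξ m₀ C : ℝ) (hξ₀ : 0 < ξ₀) (hξ₀1 : ξ₀ < 1) (hξ : 1 + ξ₀ < ξ) (hm₀ : ξ < m₀ * ξ₀)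
    (hC : 0 < C)
    (hεtail : ∀ r : ℝ, 0 < r →
      (∫ s in Set.Icc (r - ξ₀ * r) (r + ξ₀ * r),
          fε ((Real.exp (-s) : ℝ) * Complex.I) * Real.sinh s) ≤
        C * Real.exp (-(ξ - ξ₀) * r))
    (hHinv : SO2Invariant H)
    (hHbdd : ∃ B : ℝ, ∀ r : ℝ, 0 ≤ r → |H ((Real.exp (-r) : ℝ) * Complex.I)| ≤ B)
    (hHmono : ∀ r₁ r₂ : ℝ, 0 ≤ r₁ → r₁ ≤ r₂ →
      H ((Real.exp (-r₂) : ℝ) * Complex.I) ≤ H ((Real.exp (-r₁) : ℝ) * Complex.I))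
    (hHtail : ∀ r : ℝ, 0 ≤ r →
      H ((Real.exp (-r) : ℝ) * Complex.I) ≤ C * Real.exp (-m₀ * r)) :
    ∃ C' > 0, ∀ δ : ℝ, 1 ≤ δ → ∀ r : ℝ, 0 < r →
      convPolar fε (dilate H δ) ((Real.exp (-r) : ℝ) * Complex.I) ≤
        C' * δ * Real.exp (-(ξ - ξ₀) * r) := by
  have hπ := Real.pi_pos
  have hm1 : 1 < m₀ := by nlinarith
  have hmξ : ξ - ξ₀ ≤ (m₀ - 1) * ξ₀ := by nlinarith
  set F : ℝ → ℝ := fun s => fε ((Real.exp (-s) : ℝ) * Complex.I) * Real.sinh s with hFdef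
  have hFint : MeasureTheory.IntegrableOn F (Set.Ioi (0:ℝ)) := by
    by_contra hcon
    rw [MeasureTheory.integral_undef hcon] at hεnorm
    simp at hεnorm
  have hFtot : ∫ s in Set.Ioi (0:ℝ), F s = 1/(2*π) := by
    have h2π : (2*π) ≠ 0 := by positivity
    field_simp
    linarith [hεnorm]
  have hF0 : ∀ s ∈ Set.Ioi (0:ℝ), 0 ≤ F s := fun s hs =>
    mul_nonneg (hεpos _) (by simpa using Real.sinh_nonneg_iff.2 (le_of_lt hs))
  refine ⟨2*π*(2*π)*(C*(C + 1/(2*π))), by positivity, ?_⟩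
  intro δ hδ r hr
  have hδ0 : (0:ℝ) < δ := by linarith
  set bnd := C*(C + 1/(2*π))*δ*Real.exp (-(ξ-ξ₀)*r) with hbnd
  have hbnd0 : 0 < bnd := by positivity
  have hinner : ∀ φ : ℝ, (∫ s in Set.Ioi (0:ℝ), fε ((Real.exp (-s):ℝ) * Complex.I) *
      dilate H δ ((Real.exp s : ℝ) * moebius (kmat (-φ)) ((Real.exp (-r):ℝ) * Complex.I)) *
        Real.sinh s) ≤ bnd := by
    intro φ
    set p : ℝ → ℂ := fun s => ((Real.exp s : ℝ) : ℂ) * moebius (kmat (-φ)) ((Real.exp (-r):ℝ) * Complex.I) with hpdef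
    set G : ℝ → ℝ := fun s => fε ((Real.exp (-s):ℝ) * Complex.I) * dilate H δ (p s) * Real.sinh s with hGdef
    by_cases hGi : MeasureTheory.IntegrableOn G (Set.Ioi (0:ℝ))
    · set B := Set.Icc (r - ξ₀*r) (r + ξ₀*r) with hBdef
      have hBsub : B ⊆ Set.Ioi (0:ℝ) := fun x hx => by
        have h1 := hx.1
        have : 0 < r - ξ₀*r := by nlinarith
        exact Set.mem_Ioi.2 (by linarith)
      have hsplit := MeasureTheory.integral_inter_add_diff (s := Set.Ioi (0:ℝ)) (t := B)
        measurableSet_Icc hGi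
      have hIB : Set.Ioi (0:ℝ) ∩ B = B := Set.inter_eq_self_of_subset_right hBsub
      have hdb : ∀ s : ℝ, 0 < s → dilate H δ (p s) ≤ C * δ * Real.exp (-(m₀-1) * radl (p s)) :=
        fun s hs => dilate_bound H C m₀ δ hC hm1 hδ hHtail _
          (le_trans (abs_nonneg _) (radl_lower r s φ hr hs))
      have hband : (∫ s in Set.Ioi (0:ℝ) ∩ B, G s) ≤ C*δ*(C * Real.exp (-(ξ-ξ₀)*r)) := by
        rw [hIB]
        have hpt : ∀ s ∈ B, G s ≤ F s * (C*δ) := by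
          intro s hsB
          have hs0 : 0 < s := hBsub hsB
          have hfε := hεpos ((Real.exp (-s):ℝ) * Complex.I)
          have hsh : 0 ≤ Real.sinh s := by simpa using Real.sinh_nonneg_iff.2 hs0.le
          have hrl0 : 0 ≤ radl (p s) := le_trans (abs_nonneg _) (radl_lower r s φ hr hs0)
          have hexp1 : Real.exp (-(m₀-1) * radl (p s)) ≤ 1 :=
            Real.exp_le_one_iff.2 (by nlinarith)
          have hd1 : dilate H δ (p s) ≤ C*δ := by
            calc dilate H δ (p s) ≤ C * δ * Real.exp (-(m₀-1) * radl (p s)) := hdb s hs0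
              _ ≤ C * δ * 1 := mul_le_mul_of_nonneg_left hexp1 (by positivity)
              _ = C * δ := by ring
          calc G s = fε ((Real.exp (-s):ℝ) * Complex.I) * dilate H δ (p s) * Real.sinh s := rfl
            _ ≤ fε ((Real.exp (-s):ℝ) * Complex.I) * (C*δ) * Real.sinh s :=
                mul_le_mul_of_nonneg_right (mul_le_mul_of_nonneg_left hd1 hfε) hsh
            _ = F s * (C*δ) := by simp only [hFdef]; ring
        calc (∫ s in B, G s) ≤ ∫ s in B, F s * (C*δ) :=
              MeasureTheory.setIntegral_mono_on (hGi.mono_set hBsub)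
                ((hFint.mono_set hBsub).mul_const (C*δ)) measurableSet_Icc hpt
          _ = (∫ s in B, F s) * (C*δ) := MeasureTheory.integral_mul_const _ _
          _ ≤ (C * Real.exp (-(ξ-ξ₀)*r)) * (C*δ) :=
              mul_le_mul_of_nonneg_right (hεtail r hr) (by positivity)
          _ = C*δ*(C*Real.exp (-(ξ-ξ₀)*r)) := by ring
      have hout : (∫ s in Set.Ioi (0:ℝ) \ B, G s) ≤ C*δ*(Real.exp (-(ξ-ξ₀)*r) * (1/(2*π))) := by
        set e₁ := Real.exp (-(m₀-1)*(ξ₀*r)) with he₁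
        have hpt2 : ∀ s ∈ Set.Ioi (0:ℝ) \ B, G s ≤ F s * (C*δ*e₁) := by
          intro s hsd
          have hs0 : 0 < s := hsd.1
          have hfε := hεpos ((Real.exp (-s):ℝ) * Complex.I)
          have hsh : 0 ≤ Real.sinh s := by simpa using Real.sinh_nonneg_iff.2 hs0.le
          have habs : ξ₀*r ≤ |s - r| := by
            have hnB := hsd.2
            simp only [hBdef, Set.mem_Icc, not_and_or, not_le] at hnB
            rcases hnB with h | h
            · exact le_abs.2 (Or.inr (by linarith))
            · exact le_abs.2 (Or.inl (by linarith))
          have hrl : ξ₀*r ≤ radl (p s) := le_trans habs (radl_lower r s φ hr hs0)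
          have hexp1 : Real.exp (-(m₀-1) * radl (p s)) ≤ e₁ := by
            rw [he₁]
            refine Real.exp_le_exp.2 ?_
            nlinarith
          have hd1 : dilate H δ (p s) ≤ C*δ*e₁ := by
            calc dilate H δ (p s) ≤ C * δ * Real.exp (-(m₀-1) * radl (p s)) := hdb s hs0
              _ ≤ C * δ * e₁ := mul_le_mul_of_nonneg_left hexp1 (by positivity)
          calc G s = fε ((Real.exp (-s):ℝ) * Complex.I) * dilate H δ (p s) * Real.sinh s := rfl
            _ ≤ fε ((Real.exp (-s):ℝ) * Complex.I) * (C*δ*e₁) * Real.sinh s :=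
                mul_le_mul_of_nonneg_right (mul_le_mul_of_nonneg_left hd1 hfε) hsh
            _ = F s * (C*δ*e₁) := by simp only [hFdef]; ring
        have he₁0 : 0 < e₁ := Real.exp_pos _
        have hFmono : (∫ s in Set.Ioi (0:ℝ) \ B, F s) ≤ ∫ s in Set.Ioi (0:ℝ), F s := by
          refine MeasureTheory.setIntegral_mono_set hFint ?_ ?_
          · exact (MeasureTheory.ae_restrict_iff' measurableSet_Ioi).2 (MeasureTheory.ae_of_all _ hF0)
          · exact HasSubset.Subset.eventuallyLE Set.diff_subset
        have he₁e : e₁ ≤ Real.exp (-(ξ-ξ₀)*r) := by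
          rw [he₁]
          refine Real.exp_le_exp.2 ?_
          nlinarith
        calc (∫ s in Set.Ioi (0:ℝ) \ B, G s) ≤ ∫ s in Set.Ioi (0:ℝ) \ B, F s * (C*δ*e₁) :=
              MeasureTheory.setIntegral_mono_on (hGi.mono_set Set.diff_subset)
                ((hFint.mono_set Set.diff_subset).mul_const (C*δ*e₁))
                (measurableSet_Ioi.diff measurableSet_Icc) hpt2
          _ = (∫ s in Set.Ioi (0:ℝ) \ B, F s) * (C*δ*e₁) := MeasureTheory.integral_mul_const _ _
          _ ≤ (∫ s in Set.Ioi (0:ℝ), F s) * (C*δ*e₁) :=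
              mul_le_mul_of_nonneg_right hFmono (by positivity)
          _ = (1/(2*π)) * (C*δ*e₁) := by rw [hFtot]
          _ ≤ (1/(2*π)) * (C*δ*Real.exp (-(ξ-ξ₀)*r)) := by
              refine mul_le_mul_of_nonneg_left ?_ (by positivity)
              exact mul_le_mul_of_nonneg_left he₁e (by positivity)
          _ = C*δ*(Real.exp (-(ξ-ξ₀)*r) * (1/(2*π))) := by ring
      have htot : (∫ s in Set.Ioi (0:ℝ), G s) ≤ bnd := by
        rw [← hsplit, hbnd]
        calc (∫ s in Set.Ioi (0:ℝ) ∩ B, G s) + ∫ s in Set.Ioi (0:ℝ) \ B, G s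
            ≤ C*δ*(C * Real.exp (-(ξ-ξ₀)*r)) + C*δ*(Real.exp (-(ξ-ξ₀)*r) * (1/(2*π))) :=
              add_le_add hband hout
          _ = C*(C + 1/(2*π))*δ*Real.exp (-(ξ-ξ₀)*r) := by ring
      exact htot
    · rw [MeasureTheory.integral_undef hGi]
      exact hbnd0.le
  rw [convPolar]
  by_cases hoi : MeasureTheory.IntegrableOn (fun φ => ∫ s in Set.Ioi (0:ℝ),
      fε ((Real.exp (-s):ℝ) * Complex.I) *
      dilate H δ ((Real.exp s : ℝ) * moebius (kmat (-φ)) ((Real.exp (-r):ℝ) * Complex.I)) *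
        Real.sinh s) (Set.Ioo (0:ℝ) (2*π))
  · have hvol : (volume (Set.Ioo (0:ℝ) (2*π))).toReal = 2*π := by
      rw [Real.volume_Ioo, ENNReal.toReal_ofReal (by nlinarith [Real.pi_pos])]
      ring
    have hconst : MeasureTheory.IntegrableOn (fun _ : ℝ => bnd) (Set.Ioo (0:ℝ) (2*π)) := by
      refine MeasureTheory.integrableOn_const ?_
      rw [Real.volume_Ioo]
      exact ENNReal.ofReal_ne_top
    have hmono := MeasureTheory.setIntegral_mono_on hoi hconst measurableSet_Ioo
      (fun φ _ => hinner φ)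
    rw [MeasureTheory.setIntegral_const, Measure.real, hvol, smul_eq_mul] at hmono
    calc 2 * π * ∫ φ in Set.Ioo (0:ℝ) (2*π), ∫ s in Set.Ioi (0:ℝ),
          fε ((Real.exp (-s):ℝ) * Complex.I) *
          dilate H δ ((Real.exp s : ℝ) * moebius (kmat (-φ)) ((Real.exp (-r):ℝ) * Complex.I)) *
            Real.sinh s
        ≤ 2 * π * (2 * π * bnd) := mul_le_mul_of_nonneg_left hmono (by positivity)
      _ = 2*π*(2*π)*(C*(C + 1/(2*π))) * δ * Real.exp (-(ξ-ξ₀)*r) := by rw [hbnd]; ring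
  · rw [MeasureTheory.integral_undef hoi, mul_zero]
    positivity


end
end
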